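/- The subspace 𝓛 := range(L) = d_A* K₁ + d_B* K₁ is invariant under U, and in fact U(𝓛) = 𝓛. -/

import Mathlib

open ContinuousLinearMap

theorem stmt4 {K₁ K₂ : Type*}
    [NormedAddCommGroup K₁] [InnerProductSpace ℂ K₁] [FiniteDimensional ℂ K₁]
    [NormedAddCommGroup K₂] [InnerProductSpace ℂ K₂] [FiniteDimensional ℂ K₂]
    (S : K₂ →L[ℂ] K₂) (hS : IsSelfAdjoint S) (hSu : S ∈ unitary (K₂ →L[ℂ] K₂))
    (dA : K₂ →L[ℂ] K₁) (h : dA ∘L adjoint dA = 1)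
    (dB : K₂ →L[ℂ] K₁) (hdB : dB = dA ∘L S)
    (U : K₂ →L[ℂ] K₂) (hU : U = S ∘L ((2:ℂ) • (adjoint dA ∘L dA) - 1))
    (L : K₁ × K₁ →L[ℂ] K₂) (hL : ∀ f g : K₁, L (f, g) = adjoint dA f + adjoint dB g) :
    U '' (Set.range L) = Set.range L := by
  have hS' : adjoint S = S := by rw [← star_eq_adjoint]; exact hS
  have hS2 : ∀ x, S (S x) = x := by
    intro x
    have := hSu.1
    rw [hS] at this
    have := ContinuousLinearMap.ext_iff.mp this x
    simpa [mul_apply] using this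
  have hAA : ∀ f, dA (adjoint dA f) = f := by
    intro f
    have := ContinuousLinearMap.ext_iff.mp h f
    simpa using this
  have key : ∀ f g : K₁, U (L (f, g)) =
      L (-g, f + (2:ℂ) • dA (S (adjoint dA g))) := by
    intro f g
    simp only [hU, hL, hdB, adjoint_comp, hS', comp_apply, sub_apply, smul_apply,
      ContinuousLinearMap.one_apply, map_add, map_sub, map_smul, map_neg, hAA, hS2]
    module
  ext x
  constructor
  · rintro ⟨y, ⟨⟨f, g⟩, rfl⟩, rfl⟩
    exact ⟨(-g, f + (2:ℂ) • dA (S (adjoint dA g))), (key f g).symm⟩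
  · rintro ⟨⟨f, g⟩, rfl⟩
    refine ⟨L (g + (2:ℂ) • dA (S (adjoint dA f)), -f), ⟨_, rfl⟩, ?_⟩
    rw [key]
    congr 1
    ext <;> simp
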